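/- Let f : ℝ^d → ℝ be locally Lipschitz and assume hypotheses (H1)–(H5) of the setting. Define D₂ := μ/2, C₃ := (γ/4)²/(8L), C₄ := min{β/(C_a(1+δ_A)), min{μ/δ_A, C₃D₂/β}/(4(1+(1+δ_A)C_M)(μ+L)), 1/2}. Then for every x ∈ ball(x̄, δ_A/2), every σ > 0, every nonzero g ∈ ∂_σ f(x) with max{dist(x, M)/σ, σ} ≤ C₄·‖P x − x̄‖, and every ĝ ∈ ∂f(x − σ·g/‖g‖): ⟨ĝ − Q_x ĝ, g⟩ ≤ −D₂·‖g − Q_x g‖ + (C₃D₂/2)·‖P x − x̄‖². -/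

import Mathlib

open Metric Set Filter
open scoped InnerProductSpace

abbrev Euc (d : ℕ) := EuclideanSpace ℝ (Fin d)

noncomputable def clarkeSubdiff {d : ℕ} (f : Euc d → ℝ) (x : Euc d) : Set (Euc d) :=
  convexHull ℝ {v | ∃ u : ℕ → Euc d,
    (∀ n, DifferentiableAt ℝ f (u n)) ∧
    Tendsto u atTop (nhds x) ∧
    Tendsto (fun n => gradient f (u n)) atTop (nhds v)}

noncomputable def goldsteinSubdiff {d : ℕ} (f : Euc d → ℝ) (σ : ℝ) (x : Euc d) : Set (Euc d) :=
  convexHull ℝ (⋃ y ∈ closedBall x σ, clarkeSubdiff f y)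

set_option maxHeartbeats 2000000

theorem stmt6 {d : ℕ}
    (f : Euc d → ℝ) (hf : LocallyLipschitz f)
    (xbar : Euc d) (M : Set (Euc d)) (hxbarM : xbar ∈ M)
    (δA L μ γ β Ca CM : ℝ)
    (hδA : 0 < δA) (hL : 0 < L) (hμ : 0 < μ) (hγ : 0 < γ) (hβ : 0 < β)
    (hCa : 0 < Ca) (hCM : 0 < CM)
    (P : Euc d → Euc d)
    (hP : ∀ z ∈ ball xbar (2*δA), P z ∈ M ∧ ‖z - P z‖ = Metric.infDist z M)
    (Tsp : Euc d → Submodule ℝ (Euc d)) (Q : Euc d → Euc d → Euc d)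
    (hQ : ∀ x ∈ ball xbar δA, ∀ v, Q x v = ((Tsp x).orthogonalProjectionOnto v : Euc d))
    (G : Euc d → Euc d)
    (hG : ∀ x ∈ ball xbar δA, G x ∈ Tsp x)
    (H1 : ∀ x' ∈ ball xbar (2*δA), ∀ v ∈ clarkeSubdiff f x', ‖v‖ ≤ L)
    (H2 : ∀ x' ∈ ball xbar δA, ∀ v ∈ clarkeSubdiff f x',
      μ * Metric.infDist x' M ≤ ⟪ v, x' - P x' ⟫_ℝ)
    (H3 : ∀ x ∈ ball xbar δA, ∀ x' ∈ ball xbar (2*δA),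
      ‖P x' - P x - Q x (x' - x)‖ ≤ CM * (Metric.infDist x M ^ 2 + ‖x - x'‖ ^ 2))
    (H4 : ∀ x ∈ ball xbar δA, ∀ σ ∈ Icc (0:ℝ) δA, ∀ g ∈ goldsteinSubdiff f σ x,
      ‖Q x (g - G x)‖ ≤ Ca * (Metric.infDist x M + σ))
    (H5 : ∀ x ∈ ball xbar δA, γ/2 * ‖P x - xbar‖ ≤ ‖G x‖ ∧ ‖G x‖ ≤ β * ‖P x - xbar‖)
    (D₂ C₃ C₄ : ℝ)
    (hD₂ : D₂ = μ/2)
    (hC₃ : C₃ = (γ/4)^2/(8*L))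
    (hC₄ : C₄ = min (β/(Ca*(1+δA)))
      (min (min (μ/δA) (C₃*D₂/β) / (4*(1+(1+δA)*CM)*(μ+L))) (1/2)))
    (x : Euc d) (hx : x ∈ ball xbar (δA/2)) (σ : ℝ) (hσ : 0 < σ)
    (g : Euc d) (hg : g ∈ goldsteinSubdiff f σ x) (hgne : g ≠ 0)
    (hcond : max (Metric.infDist x M / σ) σ ≤ C₄ * ‖P x - xbar‖)
    (ghat : Euc d) (hghat : ghat ∈ clarkeSubdiff f (x - (σ/‖g‖) • g)) :
    ⟪ ghat - Q x ghat, g ⟫_ℝ ≤ -(D₂ * ‖g - Q x g‖) + C₃*D₂/2 * ‖P x - xbar‖^2 := by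
  -- abbreviations
  set r := ‖P x - xbar‖ with hr
  set D := Metric.infDist x M with hD
  have hgn : (0:ℝ) < ‖g‖ := norm_pos_iff.mpr hgne
  set t := σ/‖g‖ with ht
  have htpos : 0 < t := div_pos hσ hgn
  set x' := x - t • g with hx'
  -- C₄ bounds
  have hC₃pos : 0 < C₃ := by rw [hC₃]; positivity
  have hD₂pos : 0 < D₂ := by rw [hD₂]; positivity
  have hBpos : 0 < 4*(1+(1+δA)*CM)*(μ+L) := by positivity
  have hC₄pos : 0 < C₄ := by
    rw [hC₄]
    refine lt_min (by positivity) (lt_min (div_pos (lt_min (by positivity) (by positivity)) hBpos) (by norm_num))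
  have hC₄a : C₄ ≤ β/(Ca*(1+δA)) := hC₄ ▸ min_le_left _ _
  have hC₄b : C₄ ≤ min (μ/δA) (C₃*D₂/β) / (4*(1+(1+δA)*CM)*(μ+L)) :=
    le_trans (hC₄ ▸ min_le_right _ _) (min_le_left _ _)
  have hC₄c : C₄ ≤ 1/2 := le_trans (hC₄ ▸ min_le_right _ _) (min_le_right _ _)
  -- conditions
  have hσr : σ ≤ C₄ * r := le_trans (le_max_right _ _) hcond
  have hDσr : D ≤ C₄ * r * σ := by
    have := le_trans (le_max_left _ _) hcond
    exact (div_le_iff₀ hσ).mp this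
  have hrpos : 0 < r := by
    by_contra hcon
    push_neg at hcon
    have : C₄ * r ≤ 0 := mul_nonpos_of_nonneg_of_nonpos hC₄pos.le hcon
    linarith
  have hD0 : 0 ≤ D := Metric.infDist_nonneg
  -- basic ball memberships
  have hxn : ‖x - xbar‖ < δA/2 := by
    have := mem_ball_iff_norm.mp hx; linarith
  have hx1 : x ∈ ball xbar δA := by
    rw [mem_ball_iff_norm]; linarith
  have hx2 : x ∈ ball xbar (2*δA) := by
    rw [mem_ball_iff_norm]; linarith
  have hDxb : D ≤ ‖x - xbar‖ := by
    have := Metric.infDist_le_dist_of_mem (x := x) hxbarM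
    rwa [dist_eq_norm] at this
  have hPxD : ‖x - P x‖ = D := (hP x hx2).2
  have hrδA : r < δA := by
    have : r ≤ ‖P x - x‖ + ‖x - xbar‖ := norm_sub_le_norm_sub_add_norm_sub _ _ _
    rw [norm_sub_rev, hPxD] at this
    linarith
  have hσδ : σ < δA/2 := by
    have h1 : C₄ * r ≤ (1/2) * r := mul_le_mul_of_nonneg_right hC₄c hrpos.le
    linarith only [hσr, h1, hrδA, hrpos]
  have hxx' : ‖x - x'‖ = σ := by
    rw [hx', sub_sub_cancel, norm_smul, Real.norm_eq_abs, abs_of_pos htpos, ht,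
      div_mul_cancel₀ _ (ne_of_gt hgn)]
  have hx'1 : x' ∈ ball xbar δA := by
    rw [mem_ball_iff_norm]
    have : ‖x' - xbar‖ ≤ ‖x' - x‖ + ‖x - xbar‖ := norm_sub_le_norm_sub_add_norm_sub _ _ _
    rw [norm_sub_rev x' x, hxx'] at this
    linarith
  have hx'2 : x' ∈ ball xbar (2*δA) := by
    rw [mem_ball_iff_norm]
    have := mem_ball_iff_norm.mp hx'1
    linarith
  -- norm bounds
  have hghatL : ‖ghat‖ ≤ L := H1 _ hx'2 ghat hghat
  have hgL : ‖g‖ ≤ L := by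
    have hsub : goldsteinSubdiff f σ x ⊆ closedBall 0 L := by
      apply convexHull_min ?_ (convex_closedBall 0 L)
      rintro v hv
      simp only [mem_iUnion, exists_prop] at hv
      obtain ⟨y, hy, hv⟩ := hv
      have hy2 : y ∈ ball xbar (2*δA) := by
        rw [mem_ball]
        calc dist y xbar ≤ dist y x + dist x xbar := dist_triangle _ _ _
        _ ≤ σ + dist x xbar := by have := mem_closedBall.mp hy; linarith
        _ < 2*δA := by have := mem_ball.mp hx; linarith
      exact mem_closedBall_zero_iff.mpr (H1 y hy2 v hv)
    exact mem_closedBall_zero_iff.mp (hsub hg)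
  -- the projection map
  set Qc : Euc d → Euc d := fun v => ((Tsp x).orthogonalProjectionOnto v : Euc d) with hQc
  have hQx : ∀ v, Q x v = Qc v := fun v => hQ x hx1 v
  have hQcsub : ∀ a b, Qc (a - b) = Qc a - Qc b := by
    intro a b; simp [hQc, map_sub]
  have hQcsmul : ∀ (c : ℝ) a, Qc (c • a) = c • Qc a := by
    intro c a; simp [hQc, map_smul]
  have hQcneg : ∀ a, Qc (-a) = -Qc a := by
    intro a; simp [hQc, map_neg]
  set ng := ‖g - Qc g‖ with hng
  have hng0 : 0 ≤ ng := norm_nonneg _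
  -- error term from H3
  set E := P x' - P x - Q x (x' - x) with hE
  have hEb : ‖E‖ ≤ CM * (D^2 + σ^2) := by
    have := H3 x hx1 x' hx'2
    rwa [hxx', ← hD, ← hE] at this
  have hE0 : 0 ≤ ‖E‖ := norm_nonneg _
  -- key identity
  have hQx'x : Q x (x' - x) = -(t • Qc g) := by
    rw [hQx, hx', sub_sub_cancel_left, hQcneg, hQcsmul]
  have key : t • (g - Qc g) = (x - P x) - (x' - P x') - E := by
    rw [hE, hQx'x, hx', smul_sub]
    module
  -- lower bound for ‖x' - P x'‖
  have hPx'D : ‖x' - P x'‖ = Metric.infDist x' M := (hP x' hx'2).2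
  have htri : t * ng ≤ D + ‖x' - P x'‖ + ‖E‖ := by
    have h1 : ‖t • (g - Qc g)‖ = t * ng := by
      rw [norm_smul, Real.norm_eq_abs, abs_of_pos htpos, hng]
    have h2 : ‖(x - P x) - (x' - P x') - E‖ ≤ ‖x - P x‖ + ‖x' - P x'‖ + ‖E‖ :=
      le_trans (norm_sub_le _ _) (by gcongr; exact norm_sub_le _ _)
    rw [← h1, key, hPxD] at *
    linarith [h2]
  -- inner product identity
  have hip : t * ⟪ghat, g - Qc g⟫_ℝ
      = ⟪ghat, x - P x⟫_ℝ - ⟪ghat, x' - P x'⟫_ℝ - ⟪ghat, E⟫_ℝ := by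
    rw [← real_inner_smul_right, key, inner_sub_right, inner_sub_right]
  -- bounds on the three inner products
  have hb1 : ⟪ghat, x - P x⟫_ℝ ≤ L * D := by
    calc ⟪ghat, x - P x⟫_ℝ ≤ ‖ghat‖ * ‖x - P x‖ := real_inner_le_norm _ _
    _ ≤ L * D := by rw [hPxD]; exact mul_le_mul_of_nonneg_right hghatL hD0
  have hb3 : -⟪ghat, E⟫_ℝ ≤ L * ‖E‖ := by
    have h := abs_real_inner_le_norm ghat E
    have h2 : ‖ghat‖ * ‖E‖ ≤ L * ‖E‖ := mul_le_mul_of_nonneg_right hghatL hE0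
    exact le_trans (neg_le_abs _) (le_trans h h2)
  have hb2 : μ * ‖x' - P x'‖ ≤ ⟪ghat, x' - P x'⟫_ℝ := by
    rw [hPx'D]; exact H2 x' hx'1 ghat hghat
  -- main inequality at level t
  have hmain : t * ⟪ghat, g - Qc g⟫_ℝ ≤ -(μ * (t * ng)) + (L + μ) * (D + ‖E‖) := by
    have h4 : μ * (t * ng) ≤ μ*D + μ*‖x' - P x'‖ + μ*‖E‖ := by
      calc μ * (t * ng) ≤ μ * (D + ‖x' - P x'‖ + ‖E‖) :=
            mul_le_mul_of_nonneg_left htri (le_of_lt hμ)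
      _ = μ*D + μ*‖x' - P x'‖ + μ*‖E‖ := by ring
    linarith [hb2, hb1, hb3, hip, h4]
  -- bound on ‖Q x g‖ via H4 and H5
  have hH4 : ‖Q x (g - G x)‖ ≤ Ca * (D + σ) :=
    H4 x hx1 σ ⟨le_of_lt hσ, by linarith⟩ g hg
  have hGx : Qc (G x) = G x := Submodule.starProjection_eq_self_iff.mpr (hG x hx1)
  have hGb : ‖G x‖ ≤ β * r := (H5 x hx1).2
  have hCaβ : Ca * (D + σ) ≤ β * r := by
    have h1 : Ca * (1+δA) * C₄ ≤ β := by
      rw [le_div_iff₀ (by positivity : (0:ℝ) < Ca*(1+δA))] at hC₄a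
      linarith
    have h2 : D + σ ≤ C₄ * r * (1 + δA) := by
      have h3 : C₄ * r * σ ≤ C₄ * r * δA :=
        mul_le_mul_of_nonneg_left (by linarith) (mul_pos hC₄pos hrpos).le
      linarith only [hDσr, hσr, h3]
    calc Ca * (D + σ) ≤ Ca * (C₄ * r * (1+δA)) := mul_le_mul_of_nonneg_left h2 hCa.le
    _ = (Ca * (1+δA) * C₄) * r := by ring
    _ ≤ β * r := mul_le_mul_of_nonneg_right h1 hrpos.le
  have hQg : ‖Qc g‖ ≤ 2 * (β * r) := by
    have h1 : Qc g = Qc (g - G x) + G x := by rw [hQcsub, hGx]; abel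
    calc ‖Qc g‖ ≤ ‖Qc (g - G x)‖ + ‖G x‖ := h1 ▸ norm_add_le _ _
    _ ≤ Ca * (D + σ) + β * r := by
        have := hH4; rw [hQx] at this; linarith
    _ ≤ 2 * (β * r) := by linarith
  have hgbound : ‖g‖ ≤ ng + 2 * (β * r) := by
    calc ‖g‖ = ‖(g - Qc g) + Qc g‖ := by rw [sub_add_cancel]
    _ ≤ ng + ‖Qc g‖ := norm_add_le _ _
    _ ≤ ng + 2 * (β * r) := by linarith
  -- the constant Kc
  set Kc := (μ + L) * (1 + (1+δA)*CM) * C₄ with hKc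
  have hKc0 : 0 ≤ Kc := by positivity
  have hKcb : 4 * Kc ≤ min (μ/δA) (C₃*D₂/β) := by
    rw [le_div_iff₀ hBpos] at hC₄b
    calc 4 * Kc = C₄ * (4*(1+(1+δA)*CM)*(μ+L)) := by rw [hKc]; ring
    _ ≤ _ := hC₄b
  have hKc1 : Kc ≤ μ/(4*δA) := by
    have h := le_trans hKcb (min_le_left _ _)
    rw [le_div_iff₀ hδA] at h
    rw [le_div_iff₀ (by positivity : (0:ℝ) < 4*δA)]
    linarith only [h]
  have hKc2 : Kc ≤ C₃*D₂/(4*β) := by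
    have h := le_trans hKcb (min_le_right _ _)
    rw [le_div_iff₀ (by positivity : (0:ℝ) < 4*β)]
    rw [le_div_iff₀ hβ] at h
    linarith only [h]
  -- S bound
  have hS : (D + ‖E‖) ≤ σ * (C₄ * r) * (1 + (1+δA)*CM) := by
    have hDδ : D ≤ δA := by linarith
    have h1 : D * D ≤ (C₄ * r * σ) * δA :=
      mul_le_mul hDσr hDδ hD0 (by positivity)
    have h1' : CM * (D * D) ≤ CM * ((C₄ * r * σ) * δA) :=
      mul_le_mul_of_nonneg_left h1 hCM.le
    have h2 : σ * σ ≤ σ * (C₄ * r) := mul_le_mul_of_nonneg_left hσr hσ.le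
    have h2' : CM * (σ * σ) ≤ CM * (σ * (C₄ * r)) :=
      mul_le_mul_of_nonneg_left h2 hCM.le
    have hEb' : ‖E‖ ≤ CM * (D*D + σ*σ) := by
      have : CM * (D^2 + σ^2) = CM * (D*D + σ*σ) := by ring
      linarith only [hEb, this.le, this.ge]
    linarith only [hEb', hDσr, h1', h2']
  -- big bound
  have hSnn : 0 ≤ D + ‖E‖ := by linarith
  have hBig : (L + μ) * ‖g‖ * (D + ‖E‖) ≤ σ * ((μ/4) * ng + C₃ * μ / 4 * r^2) := by
    have h1 : (L + μ) * (D + ‖E‖) ≤ σ * (Kc * r) := by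
      calc (L + μ) * (D + ‖E‖) ≤ (L + μ) * (σ * (C₄ * r) * (1 + (1+δA)*CM)) :=
            mul_le_mul_of_nonneg_left hS (by positivity)
      _ = σ * (Kc * r) := by rw [hKc]; ring
    have h2 : (L + μ) * ‖g‖ * (D + ‖E‖) ≤ (L + μ) * (D + ‖E‖) * (ng + 2*(β*r)) := by
      have h2a : ((L + μ) * (D + ‖E‖)) * ‖g‖ ≤ ((L + μ) * (D + ‖E‖)) * (ng + 2*(β*r)) :=
        mul_le_mul_of_nonneg_left hgbound (mul_nonneg (by positivity) hSnn)
      linarith only [h2a]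
    have hKr : Kc * r ≤ μ/4 := by
      have h3 : Kc * r ≤ (μ/(4*δA)) * δA :=
        mul_le_mul hKc1 hrδA.le hrpos.le (by positivity)
      have h4 : (μ/(4*δA)) * δA = μ/4 := by field_simp
      linarith only [h3, h4.le, h4.ge]
    have hterm1 : σ * (Kc * r) * ng ≤ σ * ((μ/4) * ng) := by
      have h5 : σ * (Kc * r) ≤ σ * (μ/4) := mul_le_mul_of_nonneg_left hKr hσ.le
      have h6 := mul_le_mul_of_nonneg_right h5 hng0
      linarith only [h6]
    have hterm2 : σ * (Kc * r) * (2*(β*r)) ≤ σ * (C₃ * μ / 4 * r^2) := by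
      have h7 : Kc * (2*β) ≤ C₃ * μ / 4 := by
        rw [le_div_iff₀ (by positivity : (0:ℝ) < 4*β)] at hKc2
        rw [hD₂] at hKc2
        linarith only [hKc2]
      have h8 : (σ * r^2) * (Kc * (2*β)) ≤ (σ * r^2) * (C₃ * μ / 4) :=
        mul_le_mul_of_nonneg_left h7 (by positivity)
      have h9 : σ * (Kc * r) * (2*(β*r)) = (σ * r^2) * (Kc * (2*β)) := by ring
      have h10 : σ * (C₃ * μ / 4 * r^2) = (σ * r^2) * (C₃ * μ / 4) := by ring
      linarith only [h8, h9.le, h9.ge, h10.le, h10.ge]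
    have hm1 : (L + μ) * (D + ‖E‖) * ng ≤ σ * (Kc * r) * ng :=
      mul_le_mul_of_nonneg_right h1 hng0
    have hm2 : (L + μ) * (D + ‖E‖) * (2*(β*r)) ≤ σ * (Kc * r) * (2*(β*r)) :=
      mul_le_mul_of_nonneg_right h1 (by positivity)
    calc (L + μ) * ‖g‖ * (D + ‖E‖) ≤ (L + μ) * (D + ‖E‖) * (ng + 2*(β*r)) := h2
    _ = (L + μ) * (D + ‖E‖) * ng + (L + μ) * (D + ‖E‖) * (2*(β*r)) := by ring
    _ ≤ σ * (Kc * r) * ng + σ * (Kc * r) * (2*(β*r)) := by linarith only [hm1, hm2]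
    _ ≤ σ * ((μ/4) * ng) + σ * (C₃ * μ / 4 * r^2) := by linarith only [hterm1, hterm2]
    _ = σ * ((μ/4) * ng + C₃ * μ / 4 * r^2) := by ring
  -- multiply hmain by ‖g‖, use t*‖g‖ = σ
  have htg : t * ‖g‖ = σ := div_mul_cancel₀ _ (ne_of_gt hgn)
  have hσip : σ * ⟪ghat, g - Qc g⟫_ℝ
      ≤ -(μ * (σ * ng)) + (L + μ) * ‖g‖ * (D + ‖E‖) := by
    have := mul_le_mul_of_nonneg_left hmain hgn.le
    calc σ * ⟪ghat, g - Qc g⟫_ℝ = ‖g‖ * (t * ⟪ghat, g - Qc g⟫_ℝ) := by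
          rw [← mul_assoc, mul_comm ‖g‖ t, htg]
    _ ≤ ‖g‖ * (-(μ * (t * ng)) + (L + μ) * (D + ‖E‖)) := this
    _ = -(μ * ((t*‖g‖) * ng)) + (L + μ) * ‖g‖ * (D + ‖E‖) := by ring
    _ = -(μ * (σ * ng)) + (L + μ) * ‖g‖ * (D + ‖E‖) := by rw [htg]
  -- conclude
  have hfinal : ⟪ghat, g - Qc g⟫_ℝ ≤ -(μ/2 * ng) + C₃ * μ / 4 * r^2 := by
    have hpos : 0 ≤ σ * μ * ng := by positivity
    have h2 : σ * ⟪ghat, g - Qc g⟫_ℝ ≤ σ * (-(μ/2 * ng) + C₃ * μ / 4 * r^2) := by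
      linarith only [hσip, hBig, hpos]
    exact le_of_mul_le_mul_left h2 hσ
  -- rewrite goal
  have hsym : ⟪ghat - Q x ghat, g⟫_ℝ = ⟪ghat, g - Qc g⟫_ℝ := by
    rw [hQx, inner_sub_left, inner_sub_right, hQc]
    simp only [Submodule.coe_orthogonalProjectionOnto_apply, Submodule.inner_starProjection_left_eq_right]
  rw [hsym, hD₂]
  calc ⟪ghat, g - Qc g⟫_ℝ ≤ -(μ/2 * ng) + C₃ * μ / 4 * r^2 := hfinal
  _ ≤ -(μ/2 * ‖g - Q x g‖) + C₃*(μ/2)/2 * r^2 := by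
      rw [hQx g, ← hng]; linarith only []
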